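/- Let H = Heis be the integer Heisenberg group, realized as pairs [c,z] with c ∈ ℤ, z ∈ ℤ², and multiplication [c₁,z₁][c₂,z₂] = [c₁+c₂+ω(z₁,z₂), z₁+z₂], where ω is the determinant form on ℤ². Let φ : ℤ² → Aut(Heis) be given by φ(g)([c,z]) = [c + 2ω(g,z), z], and form the semidirect product Heis ⋊_φ ℤ². Then the centre of Heis ⋊_φ ℤ² is {([c,0],0) | c ∈ ℤ}, and hence is isomorphic to ℤ; in particular Heis ⋊_φ ℤ² is not isomorphic to Heis × ℤ² (whose centre is isomorphic to ℤ³). -/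

import Mathlib

/-- The symplectic (determinant) form on ℤ². -/
def sform (x y : ℤ × ℤ) : ℤ := x.1 * y.2 - x.2 * y.1

/-- The integer Heisenberg group: pairs [c,z] with c ∈ ℤ, z ∈ ℤ², and
multiplication [c₁,z₁][c₂,z₂] = [c₁+c₂+ω(z₁,z₂), z₁+z₂]. -/
@[ext] structure Heis where
  c : ℤ
  z : ℤ × ℤ

instance : Mul Heis := ⟨fun p q => ⟨p.c + q.c + sform p.z q.z, p.z + q.z⟩⟩
instance : One Heis := ⟨⟨0, 0⟩⟩
instance : Inv Heis := ⟨fun p => ⟨-p.c, -p.z⟩⟩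

theorem Heis.mul_def (p q : Heis) :
    p * q = ⟨p.c + q.c + sform p.z q.z, p.z + q.z⟩ := rfl
theorem Heis.one_def : (1 : Heis) = ⟨0, 0⟩ := rfl
theorem Heis.inv_def (p : Heis) : p⁻¹ = ⟨-p.c, -p.z⟩ := rfl

instance : Group Heis where
  mul_assoc p q r := by
    ext <;> simp [Heis.mul_def, sform, Prod.ext_iff] <;> ring
  one_mul p := by
    ext <;> simp [Heis.mul_def, Heis.one_def, sform]
  mul_one p := by
    ext <;> simp [Heis.mul_def, Heis.one_def, sform]
  inv_mul_cancel p := by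
    ext <;> simp [Heis.mul_def, Heis.one_def, Heis.inv_def, sform] <;> ring

/-- The action φ(g)([c,z]) = [c + 2ω(g,z), z] of ℤ² on Heis by (inner) automorphisms. -/
def heisPhi (g : ℤ × ℤ) (p : Heis) : Heis := ⟨p.c + 2 * sform g p.z, p.z⟩

/-- The semidirect product Heis ⋊_φ ℤ². -/
@[ext] structure SD where
  n : Heis
  g : ℤ × ℤ

instance : Mul SD := ⟨fun p q => ⟨p.n * heisPhi p.g q.n, p.g + q.g⟩⟩
instance : One SD := ⟨⟨1, 0⟩⟩
instance : Inv SD := ⟨fun p => ⟨heisPhi (-p.g) p.n⁻¹, -p.g⟩⟩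

theorem SD.mul_def (p q : SD) : p * q = ⟨p.n * heisPhi p.g q.n, p.g + q.g⟩ := rfl
theorem SD.one_def : (1 : SD) = ⟨1, 0⟩ := rfl
theorem SD.inv_def (p : SD) : p⁻¹ = ⟨heisPhi (-p.g) p.n⁻¹, -p.g⟩ := rfl

instance : Group SD where
  mul_assoc p q r := by
    ext <;>
      simp [SD.mul_def, Heis.mul_def, heisPhi, sform, Prod.ext_iff] <;> ring
  one_mul p := by
    ext <;> simp [SD.mul_def, SD.one_def, Heis.mul_def, Heis.one_def, heisPhi, sform]
  mul_one p := by
    ext <;> simp [SD.mul_def, SD.one_def, Heis.mul_def, Heis.one_def, heisPhi, sform]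
  inv_mul_cancel p := by
    ext <;>
      simp [SD.mul_def, SD.one_def, SD.inv_def, Heis.mul_def, Heis.one_def,
        Heis.inv_def, heisPhi, sform, Prod.ext_iff] <;> ring


lemma centerSD_iff (p : SD) : p ∈ Subgroup.center SD ↔ ∃ c : ℤ, p = ⟨⟨c, 0⟩, 0⟩ := by
  rw [Subgroup.mem_center_iff]
  constructor
  · intro h
    have h1 := h ⟨⟨0, (1, 0)⟩, 0⟩
    have h2 := h ⟨⟨0, (0, 1)⟩, 0⟩
    have h3 := h ⟨1, (1, 0)⟩
    have h4 := h ⟨1, (0, 1)⟩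
    simp only [SD.mul_def, Heis.mul_def, heisPhi, sform, SD.mk.injEq, Heis.mk.injEq,
      Prod.ext_iff, Prod.fst_add, Prod.snd_add, Heis.one_def, Prod.fst_zero,
      Prod.snd_zero, mul_zero, mul_one, zero_mul, one_mul, add_zero, zero_add] at h1 h2 h3 h4
    refine ⟨p.n.c, ?_⟩
    have hz1 : p.n.z.1 = 0 := by omega
    have hz2 : p.n.z.2 = 0 := by omega
    have hg1 : p.g.1 = 0 := by omega
    have hg2 : p.g.2 = 0 := by omega
    ext <;> simp [hz1, hz2, hg1, hg2, Prod.ext_iff]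
  · rintro ⟨c, rfl⟩ q
    ext <;> simp [SD.mul_def, Heis.mul_def, heisPhi, sform, Prod.ext_iff] <;> ring

lemma centerHP_iff (p : Heis × Multiplicative (ℤ × ℤ)) :
    p ∈ Subgroup.center (Heis × Multiplicative (ℤ × ℤ)) ↔ p.1.z = 0 := by
  rw [Subgroup.mem_center_iff]
  constructor
  · intro h
    have h1 := congrArg Prod.fst (h (⟨0, (1, 0)⟩, 1))
    have h2 := congrArg Prod.fst (h (⟨0, (0, 1)⟩, 1))
    simp only [Prod.fst_mul, Heis.mul_def, Heis.mk.injEq, sform,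
      Prod.mk.injEq, Prod.ext_iff, Prod.fst_add, Prod.snd_add, Prod.fst_zero,
      Prod.snd_zero, mul_zero, mul_one, zero_mul, one_mul, add_zero, zero_add] at h1 h2
    have hz1 : p.1.z.1 = 0 := by omega
    have hz2 : p.1.z.2 = 0 := by omega
    simp [Prod.ext_iff, hz1, hz2]
  · intro hz q
    have : q * p = (q.1 * p.1, q.2 * p.2) := rfl
    rw [this]
    have : p * q = (p.1 * q.1, p.2 * q.2) := rfl
    rw [this]
    refine Prod.ext ?_ (mul_comm _ _)
    ext <;> simp [Heis.mul_def, sform, hz, Prod.ext_iff] <;> ring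

def homSD : (Subgroup.center SD) →* Multiplicative ℤ where
  toFun p := Multiplicative.ofAdd p.val.n.c
  map_one' := rfl
  map_mul' := by
    rintro ⟨p, hp⟩ ⟨q, hq⟩
    obtain ⟨c, rfl⟩ := (centerSD_iff p).1 hp
    obtain ⟨d, rfl⟩ := (centerSD_iff q).1 hq
    have : ((⟨_, hp⟩ * ⟨_, hq⟩ : Subgroup.center SD) : SD)
        = (⟨⟨c, 0⟩, 0⟩ : SD) * ⟨⟨d, 0⟩, 0⟩ := rfl
    simp only [this, SD.mul_def, Heis.mul_def, heisPhi, sform]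
    simp [← ofAdd_add]

noncomputable def isoSD : (Subgroup.center SD) ≃* Multiplicative ℤ := by
  refine MulEquiv.ofBijective homSD ⟨?_, ?_⟩
  · rintro ⟨p, hp⟩ ⟨q, hq⟩ h
    obtain ⟨c, rfl⟩ := (centerSD_iff p).1 hp
    obtain ⟨d, rfl⟩ := (centerSD_iff q).1 hq
    simp only [homSD, MonoidHom.coe_mk, OneHom.coe_mk] at h
    have := Multiplicative.ofAdd.injective h
    simp [this]
  · intro c
    exact ⟨⟨⟨⟨c.toAdd, 0⟩, 0⟩, (centerSD_iff _).2 ⟨c.toAdd, rfl⟩⟩, rfl⟩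

def homHP : (Subgroup.center (Heis × Multiplicative (ℤ × ℤ)))
    →* Multiplicative (ℤ × ℤ × ℤ) where
  toFun p := Multiplicative.ofAdd (p.val.1.c, p.val.2.toAdd)
  map_one' := rfl
  map_mul' := by
    rintro ⟨p, hp⟩ ⟨q, hq⟩
    have hp' := (centerHP_iff p).1 hp
    have hq' := (centerHP_iff q).1 hq
    have : ((⟨p, hp⟩ * ⟨q, hq⟩ : Subgroup.center _) : Heis × _)
        = (p.1 * q.1, p.2 * q.2) := rfl
    simp only [this, Heis.mul_def, sform, hp', hq']
    simp [← ofAdd_add, Prod.ext_iff]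

noncomputable def isoHP : (Subgroup.center (Heis × Multiplicative (ℤ × ℤ)))
    ≃* Multiplicative (ℤ × ℤ × ℤ) := by
  refine MulEquiv.ofBijective homHP ⟨?_, ?_⟩
  · rintro ⟨p, hp⟩ ⟨q, hq⟩ h
    have hp' := (centerHP_iff p).1 hp
    have hq' := (centerHP_iff q).1 hq
    simp only [homHP, MonoidHom.coe_mk, OneHom.coe_mk] at h
    obtain ⟨h1, h2⟩ := Prod.ext_iff.mp (Multiplicative.ofAdd.injective h)
    ext
    · exact h1
    · rw [hp', hq']
    · rw [hp', hq']
    · exact congrArg Prod.fst h2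
    · exact congrArg Prod.snd h2
  · rintro c
    refine ⟨⟨(⟨c.toAdd.1, 0⟩, Multiplicative.ofAdd c.toAdd.2), (centerHP_iff _).2 rfl⟩, ?_⟩
    simp [homHP]

/-- centers transported along an iso -/
def centerCongr {G H : Type*} [Group G] [Group H] (e : G ≃* H) :
    (Subgroup.center G) ≃* (Subgroup.center H) where
  toFun p := ⟨e p.val, by
    rw [Subgroup.mem_center_iff]
    intro h
    have := (Subgroup.mem_center_iff.mp p.2) (e.symm h)
    calc h * e p.val = e (e.symm h * p.val) := by simp
      _ = e (p.val * e.symm h) := by rw [this]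
      _ = e p.val * h := by simp⟩
  invFun p := ⟨e.symm p.val, by
    rw [Subgroup.mem_center_iff]
    intro h
    have := (Subgroup.mem_center_iff.mp p.2) (e h)
    calc h * e.symm p.val = e.symm (e h * p.val) := by simp
      _ = e.symm (p.val * e h) := by rw [this]
      _ = e.symm p.val * h := by simp⟩
  left_inv p := by simp
  right_inv p := by simp
  map_mul' p q := by simp

lemma no_iso : IsEmpty (Multiplicative ℤ ≃* Multiplicative (ℤ × ℤ × ℤ)) := by
  constructor
  intro e
  let f : ℤ ≃+ ℤ × ℤ × ℤ := MulEquiv.toAdditive e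
  obtain ⟨a, ha⟩ := f.surjective (1, 0, 0)
  obtain ⟨b, hb⟩ := f.surjective (0, 1, 0)
  have h1 : f (b * a) = (b, 0, 0) := by
    rw [show b * a = b • a from (zsmul_eq_mul a b).symm, map_zsmul, ha]
    simp [Prod.ext_iff]
  have h2 : f (a * b) = (0, a, 0) := by
    rw [show a * b = a • b from (zsmul_eq_mul b a).symm, map_zsmul, hb]
    simp [Prod.ext_iff]
  rw [mul_comm] at h1
  rw [h1] at h2
  have hb0 : b = 0 := (Prod.ext_iff.mp h2).1
  rw [hb0, map_zero] at hb
  exact one_ne_zero (Prod.ext_iff.mp (Prod.ext_iff.mp hb).2).1.symm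

/-- The centre of Heis ⋊_φ ℤ² consists exactly of the elements ([c,0],0), is
isomorphic to ℤ, while the centre of Heis × ℤ² is isomorphic to ℤ³; in
particular Heis ⋊_φ ℤ² is not isomorphic to Heis × ℤ². -/
theorem stmt17 :
    (∀ p : SD, p ∈ Subgroup.center SD ↔ ∃ c : ℤ, p = ⟨⟨c, 0⟩, 0⟩) ∧
    Nonempty ((Subgroup.center SD) ≃* Multiplicative ℤ) ∧
    Nonempty ((Subgroup.center (Heis × Multiplicative (ℤ × ℤ)))
      ≃* Multiplicative (ℤ × ℤ × ℤ)) ∧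
    IsEmpty (SD ≃* Heis × Multiplicative (ℤ × ℤ)) := by
  refine ⟨centerSD_iff, ⟨isoSD⟩, ⟨isoHP⟩, ?_⟩
  constructor
  intro e
  exact no_iso.false (isoSD.symm.trans ((centerCongr e).trans isoHP))
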